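/- arXiv:0911.3267 — 3 statements merged into one kernel-verified Lean document; each statement's English description precedes it below -/
import Mathlib

section
/- Let p be an odd prime, V = (ℤ/p)² with basis x = (1,0), y = (0,1), and σ the automorphism of V with σ(x) = x, σ(y) = x + y. Let H = ⊕_{i∈ℕ} V with σ acting diagonally, and let τ be the induced automorphism of M = Hom_{ℤ/p}(H, ℤ/p) given by τ(g) = g ∘ σ^{−1}. Then the image of the endomorphism 1 − τ of M equals the subspace of τ-invariant elements of M, and both equal the subspace { g ∈ M : g(x_i) = 0 for all i ∈ ℕ }. -/
/-- The automorphism `τ(g) = g ∘ σ⁻¹` of the dual `M = Hom_{ℤ/p}(H, ℤ/p)` of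
`H = ⊕_{i ∈ ℕ} (ℤ/p)²`, induced by the diagonal action of `σ` on `H`. -/
noncomputable def tau (p : ℕ) (σ : (ZMod p × ZMod p) ≃ₗ[ZMod p] (ZMod p × ZMod p)) :
    Module.Dual (ZMod p) (ℕ →₀ ZMod p × ZMod p) →ₗ[ZMod p]
      Module.Dual (ZMod p) (ℕ →₀ ZMod p × ZMod p) :=
  (Finsupp.mapRange.linearMap σ.symm.toLinearMap).dualMap

/-- Let `p` be an odd prime, `V = (ℤ/p)²` with basis `x = (1,0)`,
`y = (0,1)`, and `σ` the automorphism of `V` with `σ(x) = x`, `σ(y) = x + y`.  Let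
`H = ⊕_{i ∈ ℕ} V` with `σ` acting diagonally, and `τ` the induced automorphism of
`M = Hom_{ℤ/p}(H, ℤ/p)`, `τ(g) = g ∘ σ⁻¹`.  Then the image of `1 - τ` equals the subspace
of `τ`-invariant elements of `M`, and both equal `{g ∈ M : g(xᵢ) = 0 for all i}`. -/
theorem statement9 (p : ℕ) (hp : p.Prime) (hodd : Odd p)
    (σ : (ZMod p × ZMod p) ≃ₗ[ZMod p] (ZMod p × ZMod p))
    (hx : σ (1, 0) = (1, 0)) (hy : σ (0, 1) = (1, 0) + (0, 1)) :
    Set.range ⇑(1 - tau p σ) = {g | tau p σ g = g} ∧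
      {g | tau p σ g = g} =
        {g : Module.Dual (ZMod p) (ℕ →₀ ZMod p × ZMod p) |
          ∀ i : ℕ, g (Finsupp.single i (1, 0)) = 0} := by
  have hσ : ∀ v : ZMod p × ZMod p, σ v = (v.1 + v.2, v.2) := by
    intro v
    have hv : v = v.1 • ((1 : ZMod p), (0 : ZMod p)) + v.2 • ((0 : ZMod p), (1 : ZMod p)) := by
      ext <;> simp
    calc σ v = σ (v.1 • ((1 : ZMod p), (0 : ZMod p)) + v.2 • ((0 : ZMod p), (1 : ZMod p))) := by
          rw [← hv]
      _ = v.1 • σ (1, 0) + v.2 • σ (0, 1) := by rw [map_add, map_smul, map_smul]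
      _ = (v.1 + v.2, v.2) := by rw [hx, hy]; ext <;> simp
  have hσs : ∀ v : ZMod p × ZMod p, σ.symm v = (v.1 - v.2, v.2) := by
    intro v
    apply σ.injective
    rw [σ.apply_symm_apply, hσ]
    ext <;> simp
  have htau : ∀ (g : Module.Dual (ZMod p) (ℕ →₀ ZMod p × ZMod p)) (i : ℕ)
      (v : ZMod p × ZMod p),
      tau p σ g (Finsupp.single i v) = g (Finsupp.single i (v.1 - v.2, v.2)) := by
    intro g i v
    simp [tau, hσs]
  have hAB : {g | tau p σ g = g} =
      {g : Module.Dual (ZMod p) (ℕ →₀ ZMod p × ZMod p) |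
        ∀ i : ℕ, g (Finsupp.single i (1, 0)) = 0} := by
    ext g
    simp only [Set.mem_setOf_eq]
    constructor
    · intro hg i
      have h1 := congrArg (fun f : Module.Dual (ZMod p) (ℕ →₀ ZMod p × ZMod p) =>
        f (Finsupp.single i ((0 : ZMod p), (1 : ZMod p)))) hg
      simp only [htau] at h1
      have hdec : (((0 : ZMod p) - 1, (1 : ZMod p)) : ZMod p × ZMod p)
          = (-1 : ZMod p) • ((1 : ZMod p), (0 : ZMod p)) + ((0 : ZMod p), (1 : ZMod p)) := by
        ext <;> simp
      rw [hdec, Finsupp.single_add, ← Finsupp.smul_single, map_add, map_smul, smul_eq_mul] at h1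
      linear_combination -h1
    · intro hg
      apply Finsupp.lhom_ext
      intro i v
      rw [htau]
      have hdec : ((v.1 - v.2, v.2) : ZMod p × ZMod p)
          = v + (-v.2) • ((1 : ZMod p), (0 : ZMod p)) := by
        ext <;> simp [sub_eq_add_neg]
      rw [hdec, Finsupp.single_add, ← Finsupp.smul_single, map_add, map_smul, hg i]
      simp
  refine ⟨?_, hAB⟩
  rw [hAB]
  ext g
  constructor
  · rintro ⟨h, rfl⟩
    intro i
    simp only [LinearMap.sub_apply, Module.End.one_apply, htau]
    simp
  · intro hg
    refine ⟨g.comp (Finsupp.mapRange.linearMap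
      (LinearMap.prod (0 : (ZMod p × ZMod p) →ₗ[ZMod p] ZMod p)
        (LinearMap.fst (ZMod p) (ZMod p) (ZMod p)))), ?_⟩
    apply Finsupp.lhom_ext
    intro i v
    have hcomp : ∀ w : ZMod p × ZMod p,
        g.comp (Finsupp.mapRange.linearMap
          (LinearMap.prod (0 : (ZMod p × ZMod p) →ₗ[ZMod p] ZMod p)
            (LinearMap.fst (ZMod p) (ZMod p) (ZMod p)))) (Finsupp.single i w)
          = g (Finsupp.single i ((0 : ZMod p), w.1)) := by
      intro w
      simp [LinearMap.prod_apply]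
    simp only [LinearMap.sub_apply, Module.End.one_apply, htau, hcomp]
    rw [← map_sub, ← Finsupp.single_sub]
    have h1 : (((0 : ZMod p), v.1) - ((0 : ZMod p), v.1 - v.2) : ZMod p × ZMod p)
        = ((0 : ZMod p), v.2) := by ext <;> simp
    rw [h1]
    have hdec : (v : ZMod p × ZMod p) = v.1 • ((1 : ZMod p), (0 : ZMod p))
        + ((0 : ZMod p), v.2) := by ext <;> simp
    conv_rhs => rw [hdec]
    rw [Finsupp.single_add, ← Finsupp.smul_single, map_add, map_smul, hg i]
    simp
end

section
/- Let p be an odd prime, V = (ℤ/p)² with basis x = (1,0), y = (0,1), and σ the automorphism of V with σ(x) = x, σ(y) = x + y. Let H = ⊕_{i∈ℕ} V with σ acting diagonally, and let τ be the induced automorphism of M = Hom_{ℤ/p}(H, ℤ/p) given by τ(g) = g ∘ σ^{−1}. Then the quotient vector space M / im(1 − τ) is infinite-dimensional over ℤ/p; indeed, the images of the functionals g_i defined by g_i(x_j) = δ_{ij} and g_i(y_j) = 0 for all j form an infinite linearly independent family in this quotient. -/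
/-- The functional `gᵢ ∈ M = Hom_{ℤ/p}(H, ℤ/p)` with `gᵢ(xⱼ) = δᵢⱼ` and `gᵢ(yⱼ) = 0` for
all `j` (it reads off the first coordinate of the `i`-th summand of `H = ⊕_{i∈ℕ} (ℤ/p)²`). -/
noncomputable def gFun (p : ℕ) (i : ℕ) :
    Module.Dual (ZMod p) (ℕ →₀ ZMod p × ZMod p) :=
  (LinearMap.fst (ZMod p) (ZMod p) (ZMod p)).comp (Finsupp.lapply i)

lemma key_vanish (p : ℕ) (σ : (ZMod p × ZMod p) ≃ₗ[ZMod p] (ZMod p × ZMod p))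
    (hx : σ (1, 0) = (1, 0))
    (g : Module.Dual (ZMod p) (ℕ →₀ ZMod p × ZMod p)) (j : ℕ) :
    ((1 - tau p σ) g) (Finsupp.single j (1, 0)) = 0 := by
  have hs : σ.symm (1, 0) = (1, 0) := by
    exact (LinearEquiv.symm_apply_eq σ).mpr hx.symm
  simp only [LinearMap.sub_apply, Module.End.one_apply, tau, LinearMap.dualMap_apply,
    LinearMap.comp_apply, Finsupp.mapRange.linearMap_apply, LinearEquiv.coe_coe]
  rw [Finsupp.mapRange_single, hs, sub_self]

lemma gFun_single (p : ℕ) (i j : ℕ) :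
    gFun p i (Finsupp.single j ((1 : ZMod p), (0 : ZMod p))) = if i = j then 1 else 0 := by
  simp [gFun, Finsupp.single_apply, eq_comm]
  split <;> simp

/-- **Statement 10.** Let `p` be an odd prime, `V = (ℤ/p)²`, and `σ` the automorphism of `V`
with `σ(x) = x`, `σ(y) = x + y` (`x = (1,0)`, `y = (0,1)`).  Let `H = ⊕_{i ∈ ℕ} V` with `σ`
acting diagonally and `τ(g) = g ∘ σ⁻¹` the induced automorphism of `M = Hom_{ℤ/p}(H, ℤ/p)`.
Then the images in `M / im (1 - τ)` of the functionals `gᵢ` (with `gᵢ(xⱼ) = δᵢⱼ`,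
`gᵢ(yⱼ) = 0`) form an infinite linearly independent family; in particular the quotient
`M / im (1 - τ)` is infinite-dimensional over `ℤ/p`. -/
theorem statement10 (p : ℕ) (hp : p.Prime) (hodd : Odd p)
    (σ : (ZMod p × ZMod p) ≃ₗ[ZMod p] (ZMod p × ZMod p))
    (hx : σ (1, 0) = (1, 0)) (hy : σ (0, 1) = (1, 0) + (0, 1)) :
    LinearIndependent (ZMod p)
      (fun i : ℕ =>
        Submodule.Quotient.mk (p := LinearMap.range (1 - tau p σ)) (gFun p i)) ∧
    ¬ Module.Finite (ZMod p)
      (Module.Dual (ZMod p) (ℕ →₀ ZMod p × ZMod p) ⧸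
        LinearMap.range (1 - tau p σ)) := by
  haveI : Fact p.Prime := ⟨hp⟩
  have hli : LinearIndependent (ZMod p)
      (fun i : ℕ =>
        Submodule.Quotient.mk (p := LinearMap.range (1 - tau p σ)) (gFun p i)) := by
    rw [linearIndependent_iff']
    intro s l hsum j hj
    have hmem : (∑ i ∈ s, l i • gFun p i) ∈ LinearMap.range (1 - tau p σ) := by
      rw [← Submodule.Quotient.mk_eq_zero, ← hsum, ← Submodule.mkQ_apply, map_sum]
      simp only [map_smul, Submodule.mkQ_apply]
    obtain ⟨g, hg⟩ := hmem
    have := congrArg (fun f => f (Finsupp.single j ((1 : ZMod p), (0 : ZMod p)))) hg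
    try simp only at this
    rw [key_vanish p σ hx] at this
    have hr : (∑ i ∈ s, l i • gFun p i) (Finsupp.single j ((1 : ZMod p), (0 : ZMod p))) = l j := by
      rw [LinearMap.sum_apply]
      rw [Finset.sum_eq_single j]
      · simp [gFun_single]
      · intro i hi hij
        simp [gFun_single, hij]
      · intro h; exact absurd hj h
    rw [hr] at this
    exact this.symm
  refine ⟨hli, ?_⟩
  intro hfin
  exact Module.Finite.not_linearIndependent_of_infinite _ hli
end

section
/- Let p be a prime and let k be a commutative ring in which p = 0. Then in the divided power algebra Γ_k(M) of any k-module M, for every integer n ≥ 1 and every m ∈ M the p-th power of the divided power element satisfies (m^{(n)})^p = 0; equivalently, the multinomial coefficient (pn)!/(n!)^p is divisible by p for every n ≥ 1, and (m^{(n)})^p = ((pn)!/(n!)^p) · m^{(pn)}. -/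
open Nat

lemma aux_dvd (n j : ℕ) : n.factorial ^ j ∣ (j * n).factorial := by
  have := Nat.prod_factorial_dvd_factorial_sum (Finset.range j) (fun _ => n)
  simpa [Finset.prod_const, Finset.sum_const, Finset.card_range, smul_eq_mul] using this

lemma aux_mul (n j : ℕ) : ((j * n).factorial / n.factorial ^ j) * n.factorial ^ j
    = (j * n).factorial := Nat.div_mul_cancel (aux_dvd n j)

lemma aux_step (n j : ℕ) :
    ((j * n).factorial / n.factorial ^ j) * (j * n + n).choose (j * n)
      = ((j + 1) * n).factorial / n.factorial ^ (j + 1) := by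
  have hne : n.factorial ^ (j + 1) ≠ 0 := by positivity
  have key : ((j * n).factorial / n.factorial ^ j) * (j * n + n).choose (j * n)
      * n.factorial ^ (j + 1) = ((j + 1) * n).factorial := by
    have hc := Nat.choose_mul_factorial_mul_factorial (Nat.le_add_right (j * n) n)
    have h1 : (j + 1) * n = j * n + n := by ring
    calc ((j * n).factorial / n.factorial ^ j) * (j * n + n).choose (j * n)
          * n.factorial ^ (j + 1)
        = (j * n + n).choose (j * n) * (((j * n).factorial / n.factorial ^ j)
            * n.factorial ^ j) * n.factorial := by ring
      _ = (j * n + n).choose (j * n) * (j * n).factorial * n.factorial := by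
          rw [aux_mul]
      _ = ((j + 1) * n).factorial := by rw [h1]; simpa using hc
  
  exact (Nat.div_eq_of_eq_mul_left (Nat.pos_of_ne_zero hne) key.symm).symm

lemma aux_pow {A : Type} [CommRing A] (γ : ℕ → A) (hγ0 : γ 0 = 1)
    (hγ : ∀ i j : ℕ, γ i * γ j = ((i + j).choose i : ℕ) • γ (i + j)) (n : ℕ) :
    ∀ j : ℕ, γ n ^ j = ((j * n).factorial / n.factorial ^ j) • γ (j * n) := by
  intro j
  induction j with
  | zero => simp [hγ0]
  | succ j ih =>
    rw [pow_succ, ih, smul_mul_assoc, hγ, smul_smul, aux_step n j]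
    congr 1
    ring

lemma aux_digitsum_pos (p n : ℕ) (hp : 1 < p) (hn : n ≠ 0) : 0 < (p.digits n).sum := by
  rcases Nat.eq_zero_or_pos (p.digits n).sum with h | h
  · exfalso
    have hne : p.digits n ≠ [] := Nat.digits_ne_nil_iff_ne_zero.mpr hn
    have hmem := List.getLast_mem hne
    have := Nat.getLast_digit_ne_zero p hn
    have : (p.digits n).getLast hne = 0 := by
      rcases List.sum_eq_zero_iff.mp h _ hmem with h'
      exact h'
    exact Nat.getLast_digit_ne_zero p hn this
  · exact h

lemma aux_p_dvd (p n : ℕ) (hp : p.Prime) (hn : 1 ≤ n) :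
    p ∣ (p * n).factorial / n.factorial ^ p := by
  haveI : Fact p.Prime := ⟨hp⟩
  set c := (p * n).factorial / n.factorial ^ p with hc
  have hcne : c ≠ 0 := by
    intro h
    have h2 := aux_mul n p
    rw [← hc] at h2
    rw [h] at h2
    simp at h2
    exact Nat.factorial_ne_zero _ h2.symm
  -- valuation equation
  have hval : padicValNat p ((p * n).factorial) = padicValNat p c + p * padicValNat p n.factorial := by
    conv_lhs => rw [← aux_mul n p]
    rw [padicValNat.mul hcne (pow_ne_zero _ (Nat.factorial_ne_zero n)), padicValNat.pow _ _]
  -- digit sums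
  have hdig : (p.digits (p * n)).sum = (p.digits n).sum := by
    rw [Nat.digits_def' hp.one_lt (Nat.mul_pos hp.pos (by omega))]
    simp [Nat.mul_div_cancel_left _ hp.pos, Nat.mul_mod_right]
  have h1 : (p - 1) * padicValNat p ((p * n).factorial) = p * n - (p.digits n).sum := by
    rw [sub_one_mul_padicValNat_factorial, hdig]
  have h2 : (p - 1) * padicValNat p n.factorial = n - (p.digits n).sum :=
    sub_one_mul_padicValNat_factorial n
  have hs_le : (p.digits n).sum ≤ n := Nat.digit_sum_le p n
  have hs_pos : 0 < (p.digits n).sum := aux_digitsum_pos p n hp.one_lt (by omega)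
  have hppos := hp.two_le
  -- deduce padicValNat p c ≥ 1
  have hv : 1 ≤ padicValNat p c := by
    by_contra hv
    have hv0 : padicValNat p c = 0 := by omega
    rw [hv0, zero_add] at hval
    have := h1
    rw [hval, ← Nat.mul_assoc, Nat.mul_comm (p-1) p, Nat.mul_assoc, h2] at this
    rw [Nat.mul_sub] at this
    have hle : p * (p.digits n).sum ≤ p * n := Nat.mul_le_mul_left p hs_le
    have h2s : 2 * (p.digits n).sum ≤ p * (p.digits n).sum :=
      Nat.mul_le_mul_right _ hppos
    omega
  calc p = p ^ 1 := (pow_one p).symm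
    _ ∣ p ^ padicValNat p c := pow_dvd_pow p hv
    _ ∣ c := pow_padicValNat_dvd

/-- **Statement 17.** Let `p` be a prime and `k` a commutative ring in which `p = 0`.  Then
in the divided power algebra `Γ_k(M)` of any `k`-module `M`, for every `n ≥ 1` and every
`m ∈ M`, the `p`-th power of the divided power element `m⁽ⁿ⁾` vanishes:  `(m⁽ⁿ⁾)^p = 0`.
Equivalently: the multinomial coefficient `(pn)!/(n!)^p` is divisible by `p` for every
`n ≥ 1`, and `(m⁽ⁿ⁾)^p = ((pn)!/(n!)^p) • m⁽ᵖⁿ⁾`.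

Here the divided powers of an element `m` of a `k`-module are formalized as a family
`γ : ℕ → A` of elements of a commutative `k`-algebra `A` with `γ 0 = 1` (so `γ n = m⁽ⁿ⁾`
and `γ 1 = m`) satisfying the defining relations `m⁽ⁱ⁾ · m⁽ʲ⁾ = C(i+j, i) · m⁽ⁱ⁺ʲ⁾` of the
divided power algebra `Γ_k(M)`. -/
theorem statement17 (p : ℕ) (hp : p.Prime) (k : Type) [CommRing k] (hpk : (p : k) = 0)
    (A : Type) [CommRing A] [Algebra k A]
    (γ : ℕ → A) (hγ0 : γ 0 = 1)
    (hγ : ∀ i j : ℕ, γ i * γ j = ((i + j).choose i : ℕ) • γ (i + j)) :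
    ∀ n : ℕ, 1 ≤ n →
      (p ∣ (p * n).factorial / (n.factorial ^ p) ∧
        γ n ^ p = ((p * n).factorial / (n.factorial ^ p)) • γ (p * n) ∧
        γ n ^ p = 0) := by
  intro n hn
  have hdvd := aux_p_dvd p n hp hn
  have hpow := aux_pow γ hγ0 hγ n p
  refine ⟨hdvd, hpow, ?_⟩
  obtain ⟨d, hd⟩ := hdvd
  rw [hpow, hd, mul_smul]
  have hpA : (p : A) = 0 := by
    rw [← map_natCast (algebraMap k A) p, hpk, map_zero]
  rw [nsmul_eq_mul, hpA, zero_mul]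
end
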